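/- Let λ,μ > 0 and let g : ℝ → ℝ be continuous satisfying (g2): liminf_{t→0⁺} G(t)/t² = +∞. Then for every ū ∈ X₀ ∩ L^∞(ℝⁿ) with ū ≥ 0 a.e. and ū not a.e. zero in Ω, there exists t₀ > 0 such that E_{λ,μ}(t ū) < 0 for all t ∈ (0,t₀), where E_{λ,μ}(u) := (1/2)‖u‖² − (μ/2*)∫_Ω |u|^{2*} dx − λ∫_Ω G(u) dx. In particular 0 is not a local minimizer of E_{λ,μ}. -/

import Mathlib

open MeasureTheory Filter Topology Set

noncomputable section

/-- Euclidean space `ℝⁿ`. -/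
abbrev EV (n : ℕ) := EuclideanSpace ℝ (Fin n)

/-- The fractional critical Sobolev exponent `2* = 2n/(n-2s)`. -/
def twoStar (n : ℕ) (s : ℝ) : ℝ := 2 * n / (n - 2 * s)

/-- Gagliardo-type bilinear form `⟨u,v⟩ = ∬ (u(x)-u(y))(v(x)-v(y)) K(x-y) dx dy`. -/
def gInner {n : ℕ} (K : EV n → ℝ) (u v : EV n → ℝ) : ℝ :=
  ∫ p : EV n × EV n, (u p.1 - u p.2) * (v p.1 - v p.2) * K (p.1 - p.2)

/-- Gagliardo norm `‖u‖ = ⟨u,u⟩^{1/2}`. -/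
def gNorm {n : ℕ} (K : EV n → ℝ) (u : EV n → ℝ) : ℝ := Real.sqrt (gInner K u u)

/-- Membership in the space `X₀`: measurable, vanishing a.e. outside `Ω`,
with finite Gagliardo seminorm. -/
structure MemX0 {n : ℕ} (K : EV n → ℝ) (Ω : Set (EV n)) (u : EV n → ℝ) : Prop where
  meas : Measurable u
  zero : ∀ᵐ x ∂(volume : Measure (EV n)), x ∉ Ω → u x = 0
  fin : Integrable (fun p : EV n × EV n => (u p.1 - u p.2) ^ 2 * K (p.1 - p.2))

/-- `L^p` norm (real exponent `p`) on `Ω`. -/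
def lpNorm {n : ℕ} (Ω : Set (EV n)) (p : ℝ) (u : EV n → ℝ) : ℝ :=
  (∫ x in Ω, |u x| ^ p) ^ (1 / p)

/-- Weak convergence in `X₀`. -/
def WeakConv {n : ℕ} (K : EV n → ℝ) (Ω : Set (EV n)) (uj : ℕ → EV n → ℝ)
    (u : EV n → ℝ) : Prop :=
  ∀ v, MemX0 K Ω v → Tendsto (fun j => gInner K (uj j) v) atTop (𝓝 (gInner K u v))

/-- The singular kernel `|x|^{-(n+2s)}` of the fractional Laplacian. -/
def fracKernel (n : ℕ) (s : ℝ) : EV n → ℝ := fun x => ‖x‖ ^ (-((n : ℝ) + 2 * s))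

/-- The energy functional `E_{λ,μ}`. -/
def energy {n : ℕ} (s : ℝ) (K : EV n → ℝ) (Ω : Set (EV n)) (μ lam : ℝ)
    (g : ℝ → ℝ) (u : EV n → ℝ) : ℝ :=
  1 / 2 * gNorm K u ^ 2 - μ / twoStar n s * (∫ x in Ω, |u x| ^ twoStar n s)
    - lam * ∫ x in Ω, (∫ τ in (0:ℝ)..(u x), g τ)

/-- The functional `Ê_μ`. -/
def energyHat {n : ℕ} (s : ℝ) (K : EV n → ℝ) (Ω : Set (EV n)) (μ : ℝ)
    (u : EV n → ℝ) : ℝ :=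
  1 / 2 * gNorm K u ^ 2 - μ / twoStar n s * (∫ x in Ω, |u x| ^ twoStar n s)

/-- The functional `Ẽ_{λ,μ}`. -/
def energyTilde {n : ℕ} (s : ℝ) (K : EV n → ℝ) (Ω : Set (EV n)) (μ lam : ℝ)
    (g : ℝ → ℝ) (u : EV n → ℝ) : ℝ :=
  μ / twoStar n s * (∫ x in Ω, |u x| ^ twoStar n s)
    + lam * ∫ x in Ω, (∫ τ in (0:ℝ)..(u x), g τ)

/-- The energy functional of the singular problem. -/
def energySing {n : ℕ} (s : ℝ) (K : EV n → ℝ) (Ω : Set (EV n)) (μ lam r : ℝ)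
    (g : ℝ → ℝ) (u : EV n → ℝ) : ℝ :=
  1 / 2 * gNorm K u ^ 2 - μ / twoStar n s * (∫ x in Ω, (max (u x) 0) ^ twoStar n s)
    - lam / r * (∫ x in Ω, (max (u x) 0) ^ r)
    - lam * ∫ x in Ω, (∫ τ in (0:ℝ)..(max (u x) 0), g τ)

namespace Aux
variable {n : ℕ}

lemma gInner_smul (K : EV n → ℝ) (u : EV n → ℝ) (t : ℝ) :
    gInner K (fun x => t * u x) (fun x => t * u x) = t ^ 2 * gInner K u u := by
  rw [gInner, gInner, ← integral_const_mul]
  congr 1; funext p; ring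

lemma gInner_self_nonneg (K : EV n → ℝ) (hKpos : ∀ x : EV n, x ≠ 0 → 0 < K x)
    (u : EV n → ℝ) : 0 ≤ gInner K u u := by
  apply integral_nonneg
  intro p
  rcases eq_or_ne p.1 p.2 with h | h
  · simp [h]
  · exact mul_nonneg (mul_self_nonneg _) (hKpos _ (sub_ne_zero.mpr h)).le

lemma int_left (m : EV n → ℝ) (hm : Integrable m) (S : Set (EV n))
    (hS : MeasurableSet S) (hSf : volume S < ⊤) :
    Integrable (fun p : EV n × EV n => S.indicator (fun _ => (1:ℝ)) p.1 * m (p.1 - p.2)) := by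
  have hind : Integrable (S.indicator fun _ => (1:ℝ)) := by
    rw [integrable_indicator_iff hS]
    exact integrableOn_const hSf.ne
  have hmn : Integrable (fun b : EV n => m (-b)) := hm.comp_neg
  have hG : Integrable (fun q : EV n × EV n => S.indicator (fun _ => (1:ℝ)) q.1 * m (-q.2))
      ((volume : Measure (EV n)).prod volume) := hind.mul_prod hmn
  have h2 := ((measurePreserving_prod_sub (volume : Measure (EV n)) volume).integrable_comp
      hG.aestronglyMeasurable).mpr hG
  rw [Measure.volume_eq_prod]
  have h3 : (fun p : EV n × EV n => S.indicator (fun _ => (1:ℝ)) p.1 * m (p.1 - p.2))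
      = (fun q : EV n × EV n => S.indicator (fun _ => (1:ℝ)) q.1 * m (-q.2))
        ∘ (fun z : EV n × EV n => (z.1, z.2 - z.1)) := by
    funext p; simp [neg_sub]
  rw [h3]; exact h2

lemma int_right (m : EV n → ℝ) (hm : Integrable m) (S : Set (EV n))
    (hS : MeasurableSet S) (hSf : volume S < ⊤) :
    Integrable (fun p : EV n × EV n => S.indicator (fun _ => (1:ℝ)) p.2 * m (p.1 - p.2)) := by
  have hind : Integrable (S.indicator fun _ => (1:ℝ)) := by
    rw [integrable_indicator_iff hS]
    exact integrableOn_const hSf.ne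
  have hG : Integrable (fun q : EV n × EV n => m q.1 * S.indicator (fun _ => (1:ℝ)) q.2)
      ((volume : Measure (EV n)).prod volume) := hm.mul_prod hind
  have h2 := ((measurePreserving_sub_prod (volume : Measure (EV n)) volume).integrable_comp
      hG.aestronglyMeasurable).mpr hG
  rw [Measure.volume_eq_prod]
  have h3 : (fun p : EV n × EV n => S.indicator (fun _ => (1:ℝ)) p.2 * m (p.1 - p.2))
      = (fun q : EV n × EV n => m q.1 * S.indicator (fun _ => (1:ℝ)) q.2)
        ∘ (fun z : EV n × EV n => (z.1 - z.2, z.2)) := by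
    funext p; simp [mul_comm]
  rw [h3]; exact h2

lemma aem_K (hn : 0 < n) (K : EV n → ℝ)
    (hK1 : Integrable (fun x : EV n => min (‖x‖ ^ 2) 1 * K x)) :
    AEMeasurable K (volume : Measure (EV n)) := by
  haveI : Nontrivial (EV n) :=
    nontrivial_of_ne (EuclideanSpace.single ⟨0, hn⟩ (1:ℝ)) 0 (by
      intro h
      have := congrArg (fun v : EV n => v ⟨0, hn⟩) h
      simp [EuclideanSpace.single_apply] at this)
  have h0 : ∀ᵐ x : EV n ∂volume, x ≠ 0 := by
    rw [ae_iff]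
    simp
  have heq : K =ᵐ[volume] fun x => (min (‖x‖ ^ 2) 1 * K x) / (min (‖x‖ ^ 2) 1) := by
    filter_upwards [h0] with x hx
    have hp : 0 < min (‖x‖ ^ 2) 1 := lt_min (pow_pos (norm_pos_iff.mpr hx) 2) one_pos
    exact (mul_div_cancel_left₀ _ hp.ne').symm
  exact (hK1.aemeasurable.div
    (((continuous_norm.pow 2).min continuous_const).measurable.aemeasurable)).congr heq.symm


lemma memX0_bump (hn : 0 < n) (K : EV n → ℝ) (Ω : Set (EV n))
    (hKpos : ∀ x : EV n, x ≠ 0 → 0 < K x)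
    (hK1 : Integrable (fun x : EV n => min (‖x‖ ^ 2) 1 * K x))
    (x₀ : EV n) (ρ : ℝ) (hρ : 0 < ρ) (hball : Metric.ball x₀ ρ ⊆ Ω) :
    MemX0 K Ω (fun x => max 0 (ρ - dist x x₀)) := by
  set w : EV n → ℝ := fun x => max 0 (ρ - dist x x₀) with hwdef
  have hcont : Continuous w :=
    continuous_const.max (continuous_const.sub (continuous_id.dist continuous_const))
  have hwz : ∀ x, x ∉ Metric.ball x₀ ρ → w x = 0 := by
    intro x hx
    have hd : ρ ≤ dist x x₀ := by simpa [Metric.mem_ball] using hx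
    simp only [hwdef]
    exact max_eq_left (by linarith)
  have hwnn : ∀ x, 0 ≤ w x := fun x => le_max_left _ _
  have hwle : ∀ x, w x ≤ ρ := fun x =>
    max_le hρ.le (by linarith [dist_nonneg (x := x) (y := x₀)])
  refine ⟨hcont.measurable, Eventually.of_forall fun x hx => hwz x fun h => hx (hball h), ?_⟩
  set S := Metric.ball x₀ ρ with hS
  set m : EV n → ℝ := fun z => min (‖z‖ ^ 2) 1 * K z with hm
  set C : ℝ := max 1 (ρ ^ 2) with hC
  have hC0 : 0 ≤ C := le_trans zero_le_one (le_max_left _ _)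
  have hSm : MeasurableSet S := Metric.isOpen_ball.measurableSet
  have hSf : volume S < ⊤ := measure_ball_lt_top
  have hintL := int_left m hK1 S hSm hSf
  have hintR := int_right m hK1 S hSm hSf
  have hbound : Integrable (fun p : EV n × EV n =>
      C * (S.indicator (fun _ => (1:ℝ)) p.1 * m (p.1 - p.2))
      + C * (S.indicator (fun _ => (1:ℝ)) p.2 * m (p.1 - p.2))) :=
    (hintL.const_mul C).add (hintR.const_mul C)
  have hKae : AEMeasurable (fun p : EV n × EV n => K (p.1 - p.2)) volume := by
    rw [Measure.volume_eq_prod]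
    exact (aem_K hn K hK1).comp_quasiMeasurePreserving
      (quasiMeasurePreserving_sub volume volume)
  have haesm : AEStronglyMeasurable
      (fun p : EV n × EV n => (w p.1 - w p.2) ^ 2 * K (p.1 - p.2)) volume :=
    (((hcont.comp continuous_fst).sub (hcont.comp continuous_snd)).pow
        2).aestronglyMeasurable.mul hKae.aestronglyMeasurable
  refine hbound.mono' haesm (Eventually.of_forall fun p => ?_)
  obtain ⟨x, y⟩ := p
  simp only [Real.norm_eq_abs]
  have hmnn : ∀ z : EV n, 0 ≤ m z := by
    intro z
    rcases eq_or_ne z 0 with rfl | hz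
    · simp [hm]
    · exact mul_nonneg (le_min (by positivity) zero_le_one) (hKpos z hz).le
  have hindnn : ∀ a : EV n, 0 ≤ S.indicator (fun _ => (1:ℝ)) a := fun a =>
    Set.indicator_nonneg (fun _ _ => zero_le_one) a
  rcases eq_or_ne x y with rfl | hxy
  · have hm0 : m 0 = 0 := by simp [hm]
    simp [sub_self, hm0]
  · have hK0 : 0 < K (x - y) := hKpos _ (sub_ne_zero.mpr hxy)
    have hmin0 : 0 ≤ min (‖x - y‖ ^ 2) 1 := le_min (by positivity) zero_le_one
    have key : (w x - w y) ^ 2 ≤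
        C * ((S.indicator (fun _ => (1:ℝ)) x + S.indicator (fun _ => (1:ℝ)) y)
          * min (‖x - y‖ ^ 2) 1) := by
      by_cases hcase : x ∈ S ∨ y ∈ S
      · have hsum : 1 ≤ S.indicator (fun _ => (1:ℝ)) x + S.indicator (fun _ => (1:ℝ)) y := by
          rcases hcase with h | h
          · have : S.indicator (fun _ => (1:ℝ)) x = 1 := Set.indicator_of_mem h _
            linarith [hindnn y]
          · have : S.indicator (fun _ => (1:ℝ)) y = 1 := Set.indicator_of_mem h _
            linarith [hindnn x]
        -- Lipschitz and boundedness estimates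
        have h1 : |w x - w y| ≤ ‖x - y‖ := by
          have ha : |max (ρ - dist x x₀) 0 - max (ρ - dist y x₀) 0|
              ≤ |(ρ - dist x x₀) - (ρ - dist y x₀)| := abs_max_sub_max_le_abs _ _ _
          have hb : |(ρ - dist x x₀) - (ρ - dist y x₀)| = |dist y x₀ - dist x x₀| := by
            congr 1; ring
          have hc : |dist y x₀ - dist x x₀| ≤ dist y x := abs_dist_sub_le _ _ _
          have hd : dist y x = ‖x - y‖ := by rw [dist_comm, dist_eq_norm]
          simp only [hwdef]
          rw [max_comm 0 (ρ - dist x x₀), max_comm 0 (ρ - dist y x₀)]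
          calc |max (ρ - dist x x₀) 0 - max (ρ - dist y x₀) 0|
              ≤ |(ρ - dist x x₀) - (ρ - dist y x₀)| := ha
            _ = |dist y x₀ - dist x x₀| := hb
            _ ≤ dist y x := hc
            _ = ‖x - y‖ := hd
        have h2 : |w x - w y| ≤ ρ := by
          rw [abs_sub_le_iff]
          constructor <;> [linarith [hwnn y, hwle x]; linarith [hwnn x, hwle y]]
        have hsq1 : (w x - w y) ^ 2 ≤ ‖x - y‖ ^ 2 := by
          rw [← sq_abs]
          exact pow_le_pow_left₀ (abs_nonneg _) h1 2
        have hsq2 : (w x - w y) ^ 2 ≤ ρ ^ 2 := by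
          rw [← sq_abs]
          exact pow_le_pow_left₀ (abs_nonneg _) h2 2
        have hCm : min (‖x - y‖ ^ 2) (ρ ^ 2) ≤ C * min (‖x - y‖ ^ 2) 1 := by
          rcases le_total (‖x - y‖ ^ 2) 1 with h | h
          · calc min (‖x - y‖ ^ 2) (ρ ^ 2) ≤ ‖x - y‖ ^ 2 := min_le_left _ _
              _ = 1 * min (‖x - y‖ ^ 2) 1 := by rw [one_mul, min_eq_left h]
              _ ≤ C * min (‖x - y‖ ^ 2) 1 :=
                mul_le_mul_of_nonneg_right (le_max_left _ _) hmin0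
          · calc min (‖x - y‖ ^ 2) (ρ ^ 2) ≤ ρ ^ 2 := min_le_right _ _
              _ = ρ ^ 2 * min (‖x - y‖ ^ 2) 1 := by rw [min_eq_right h, mul_one]
              _ ≤ C * min (‖x - y‖ ^ 2) 1 :=
                mul_le_mul_of_nonneg_right (le_max_right _ _) hmin0
        have hstep : (w x - w y) ^ 2 ≤ C * min (‖x - y‖ ^ 2) 1 :=
          le_trans (le_min hsq1 hsq2) hCm
        have hCmin : 0 ≤ C * min (‖x - y‖ ^ 2) 1 := mul_nonneg hC0 hmin0
        calc (w x - w y) ^ 2 ≤ C * min (‖x - y‖ ^ 2) 1 := hstep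
          _ = C * min (‖x - y‖ ^ 2) 1 * 1 := (mul_one _).symm
          _ ≤ C * min (‖x - y‖ ^ 2) 1
              * (S.indicator (fun _ => (1:ℝ)) x + S.indicator (fun _ => (1:ℝ)) y) :=
            mul_le_mul_of_nonneg_left hsum hCmin
          _ = C * ((S.indicator (fun _ => (1:ℝ)) x + S.indicator (fun _ => (1:ℝ)) y)
              * min (‖x - y‖ ^ 2) 1) := by ring
      · push_neg at hcase
        have hx0 : w x = 0 := hwz x hcase.1
        have hy0 : w y = 0 := hwz y hcase.2
        have hix : S.indicator (fun _ => (1:ℝ)) x = 0 := Set.indicator_of_notMem hcase.1 _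
        have hiy : S.indicator (fun _ => (1:ℝ)) y = 0 := Set.indicator_of_notMem hcase.2 _
        rw [hx0, hy0, hix, hiy]
        simp
    have habs : |(w x - w y) ^ 2 * K (x - y)| = (w x - w y) ^ 2 * K (x - y) :=
      abs_of_nonneg (mul_nonneg (sq_nonneg _) hK0.le)
    rw [habs]
    calc (w x - w y) ^ 2 * K (x - y)
        ≤ C * ((S.indicator (fun _ => (1:ℝ)) x + S.indicator (fun _ => (1:ℝ)) y)
            * min (‖x - y‖ ^ 2) 1) * K (x - y) :=
          mul_le_mul_of_nonneg_right key hK0.le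
      _ = C * (S.indicator (fun _ => (1:ℝ)) x * m (x - y))
          + C * (S.indicator (fun _ => (1:ℝ)) y * m (x - y)) := by
          simp only [hm]; ring


lemma part1 (s : ℝ) (hs0 : 0 < s) (hn : 2 * s < (n : ℝ))
    (Ω : Set (EV n)) (hΩo : IsOpen Ω) (hΩb : Bornology.IsBounded Ω)
    (K : EV n → ℝ) (hKpos : ∀ x : EV n, x ≠ 0 → 0 < K x)
    (lam μ : ℝ) (hlam : 0 < lam) (hμ : 0 < μ)
    (g : ℝ → ℝ) (hgc : Continuous g)
    (hg2 : Tendsto (fun t : ℝ => (∫ τ in (0:ℝ)..t, g τ) / t ^ 2) (𝓝[>] 0) atTop)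
    (ub : EV n → ℝ) (hub : MemX0 K Ω ub)
    (hbdd : ∃ C : ℝ, ∀ᵐ x ∂(volume : Measure (EV n)), |ub x| ≤ C)
    (hpos : ∀ᵐ x ∂(volume : Measure (EV n)), 0 ≤ ub x)
    (hne : ¬ (∀ᵐ x ∂(volume : Measure (EV n)), x ∈ Ω → ub x = 0)) :
    ∃ t₀ > (0:ℝ), ∀ t : ℝ, t ∈ Set.Ioo 0 t₀ →
      energy s K Ω μ lam g (fun x => t * ub x) < 0 := by
  obtain ⟨C, hC⟩ := hbdd
  set C' := max C 1 with hC'def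
  have hC'pos : (0:ℝ) < C' := lt_of_lt_of_le one_pos (le_max_right _ _)
  have hC2 : ∀ᵐ x ∂(volume : Measure (EV n)), |ub x| ≤ C' :=
    hC.mono fun x h => h.trans (le_max_left _ _)
  have hΩm : MeasurableSet Ω := hΩo.measurableSet
  have hΩfin : volume Ω < ⊤ := hΩb.measure_lt_top
  have h2star : 0 < twoStar n s := by
    have hn0 : (0:ℝ) < n := by linarith
    exact div_pos (by linarith) (by linarith)
  -- ub^2 integrable on Ω
  have hub2 : IntegrableOn (fun x => ub x ^ 2) Ω volume := by
    have hconst : IntegrableOn (fun _ : EV n => C' ^ 2) Ω volume :=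
      integrableOn_const hΩfin.ne
    refine hconst.mono' ((hub.meas.pow_const 2).aestronglyMeasurable) ?_
    filter_upwards [ae_restrict_of_ae hC2] with x hx
    rw [Real.norm_eq_abs, abs_pow]
    exact pow_le_pow_left₀ (abs_nonneg _) hx 2
  set A := ∫ x in Ω, ub x ^ 2 with hAdef
  have hApos : 0 < A := by
    rcases (integral_nonneg (μ := volume.restrict Ω) (f := fun x => ub x ^ 2) fun x => sq_nonneg (ub x)).lt_or_eq with h | h
    · exact h
    · exfalso
      apply hne
      have hzero := (integral_eq_zero_iff_of_nonneg_ae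
        (Eventually.of_forall fun x => sq_nonneg (ub x)) hub2).mp h.symm
      have h' := (ae_restrict_iff' hΩm).mp hzero
      filter_upwards [h'] with x hx hxΩ
      have := hx hxΩ
      exact (pow_eq_zero_iff (two_ne_zero)).mp this
  set Q := gInner K ub ub with hQdef
  have hQ0 : 0 ≤ Q := gInner_self_nonneg K hKpos ub
  set M := Q / (2 * lam * A) + 1 with hMdef
  have hMA : lam * (M * A) = Q / 2 + lam * A := by
    rw [hMdef]
    field_simp
  obtain ⟨δ, hδpos, hδ⟩ : ∃ δ > (0:ℝ), ∀ t : ℝ, 0 < t → t < δ →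
      M * t ^ 2 ≤ ∫ τ in (0:ℝ)..t, g τ := by
    have hev : ∀ᶠ t in 𝓝[>] (0:ℝ), M ≤ (∫ τ in (0:ℝ)..t, g τ) / t ^ 2 :=
      hg2.eventually_ge_atTop M
    rw [eventually_nhdsWithin_iff, Metric.eventually_nhds_iff] at hev
    obtain ⟨δ, hδpos, h⟩ := hev
    refine ⟨δ, hδpos, fun t ht htδ => ?_⟩
    have hd : dist t 0 < δ := by rw [Real.dist_eq, sub_zero, abs_of_pos ht]; exact htδ
    have := h hd (mem_Ioi.mpr ht)
    exact (le_div_iff₀ (by positivity)).mp this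
  refine ⟨δ / C', div_pos hδpos hC'pos, fun t ht => ?_⟩
  obtain ⟨ht0, htδ⟩ := ht
  have htC : t * C' < δ := (lt_div_iff₀ hC'pos).mp htδ
  -- gNorm piece
  have hgn : gNorm K (fun x => t * ub x) ^ 2 = t ^ 2 * Q := by
    rw [gNorm, gInner_smul, ← hQdef, Real.sq_sqrt (mul_nonneg (sq_nonneg t) hQ0)]
  -- Sobolev piece
  have hsob : 0 ≤ ∫ x in Ω, |t * ub x| ^ twoStar n s :=
    integral_nonneg fun x => Real.rpow_nonneg (abs_nonneg _) _
  -- G piece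
  have hGcont : Continuous fun y : ℝ => ∫ τ in (0:ℝ)..y, g τ :=
    intervalIntegral.continuous_primitive (fun a b => hgc.intervalIntegrable a b) 0
  obtain ⟨D, hD⟩ := (isCompact_Icc : IsCompact (Icc (0:ℝ) δ)).exists_bound_of_continuousOn
    hGcont.continuousOn
  have haemem : ∀ᵐ x ∂(volume : Measure (EV n)), 0 ≤ t * ub x ∧ t * ub x < δ := by
    filter_upwards [hpos, hC2] with x h0 h1
    refine ⟨mul_nonneg ht0.le h0, ?_⟩
    have hux : ub x ≤ C' := (le_abs_self _).trans h1
    calc t * ub x ≤ t * C' := by nlinarith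
      _ < δ := htC
  have hGint : IntegrableOn (fun x => ∫ τ in (0:ℝ)..(t * ub x), g τ) Ω volume := by
    have hconst : IntegrableOn (fun _ : EV n => D) Ω volume :=
      integrableOn_const hΩfin.ne
    refine hconst.mono'
      ((hGcont.measurable.comp (hub.meas.const_mul t)).aestronglyMeasurable) ?_
    filter_upwards [ae_restrict_of_ae haemem] with x hx
    exact hD _ ⟨hx.1, hx.2.le⟩
  have hlowint : IntegrableOn (fun x => M * (t ^ 2 * ub x ^ 2)) Ω volume := by
    have := hub2.const_mul (M * t ^ 2)
    refine this.congr (Eventually.of_forall fun x => by ring)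
  have hlow : ∀ᵐ x ∂((volume : Measure (EV n)).restrict Ω),
      M * (t ^ 2 * ub x ^ 2) ≤ ∫ τ in (0:ℝ)..(t * ub x), g τ := by
    filter_upwards [ae_restrict_of_ae haemem, ae_restrict_of_ae hpos] with x hx h0
    rcases eq_or_lt_of_le h0 with h | h
    · simp [← h]
    · have h1 : 0 < t * ub x := mul_pos ht0 h
      have h2 := hδ _ h1 hx.2
      calc M * (t ^ 2 * ub x ^ 2) = M * (t * ub x) ^ 2 := by ring
        _ ≤ _ := h2
  have hGge : M * t ^ 2 * A ≤ ∫ x in Ω, ∫ τ in (0:ℝ)..(t * ub x), g τ := by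
    have hmono := integral_mono_ae hlowint hGint hlow
    have heq : ∫ x in Ω, M * (t ^ 2 * ub x ^ 2) = M * t ^ 2 * A := by
      rw [hAdef, ← integral_const_mul]
      congr 1
      funext x
      ring
    linarith [hmono, heq.ge, heq.le]
  -- assemble
  have hE : energy s K Ω μ lam g (fun x => t * ub x)
      ≤ 1 / 2 * (t ^ 2 * Q) - lam * (M * t ^ 2 * A) := by
    rw [energy, hgn]
    have h1 : 0 ≤ μ / twoStar n s * ∫ x in Ω, |t * ub x| ^ twoStar n s :=
      mul_nonneg (div_nonneg hμ.le h2star.le) hsob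
    have h2 : lam * (M * t ^ 2 * A) ≤ lam * ∫ x in Ω, ∫ τ in (0:ℝ)..(t * ub x), g τ :=
      mul_le_mul_of_nonneg_left hGge hlam.le
    have step : 1 / 2 * (t ^ 2 * Q) - μ / twoStar n s * (∫ x in Ω, |t * ub x| ^ twoStar n s)
        - lam * ∫ x in Ω, (∫ τ in (0:ℝ)..(t * ub x), g τ)
        ≤ 1 / 2 * (t ^ 2 * Q) - 0 - lam * (M * t ^ 2 * A) :=
      sub_le_sub (sub_le_sub_left h1 _) h2
    linarith [step]
  have heq2 : 1 / 2 * (t ^ 2 * Q) - lam * (M * t ^ 2 * A) = -(t ^ 2 * (lam * A)) := by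
    calc 1 / 2 * (t ^ 2 * Q) - lam * (M * t ^ 2 * A)
        = t ^ 2 * (Q / 2) - t ^ 2 * (lam * (M * A)) := by ring
      _ = t ^ 2 * (Q / 2) - t ^ 2 * (Q / 2 + lam * A) := by rw [hMA]
      _ = -(t ^ 2 * (lam * A)) := by ring
  have hfin : 0 < t ^ 2 * (lam * A) := mul_pos (pow_pos ht0 2) (mul_pos hlam hApos)
  linarith


end Aux

/-- **Non-triviality of the minimizer via (g2)** (final step in the proof of
Theorem 3.1): under (g2), for every nonnegative bounded `ū ∈ X₀` not a.e. zero
in `Ω` one has `E_{λ,μ}(t ū) < 0` for all small `t > 0`; in particular `0` is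
not a local minimizer of `E_{λ,μ}`. -/
theorem statement12
    (n : ℕ) (s : ℝ) (hs : s ∈ Set.Ioo (0:ℝ) 1) (hn : 2 * s < n)
    (Ω : Set (EV n)) (hΩo : IsOpen Ω) (hΩne : Ω.Nonempty) (hΩb : Bornology.IsBounded Ω)
    (K : EV n → ℝ)
    (hKpos : ∀ x : EV n, x ≠ 0 → 0 < K x)
    (hK1 : Integrable (fun x : EV n => min (‖x‖ ^ 2) 1 * K x))
    (hK2 : ∃ k₀ > 0, ∀ x : EV n, x ≠ 0 → k₀ * ‖x‖ ^ (-((n : ℝ) + 2 * s)) ≤ K x)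
    (lam μ : ℝ) (hlam : 0 < lam) (hμ : 0 < μ)
    (g : ℝ → ℝ) (hgc : Continuous g)
    -- (g2): `liminf_{t→0⁺} G(t)/t² = +∞`:
    (hg2 : Tendsto (fun t : ℝ => (∫ τ in (0:ℝ)..t, g τ) / t ^ 2) (𝓝[>] 0) atTop) :
    (∀ ub : EV n → ℝ, MemX0 K Ω ub →
      (∃ C : ℝ, ∀ᵐ x ∂(volume : Measure (EV n)), |ub x| ≤ C) →
      (∀ᵐ x ∂(volume : Measure (EV n)), 0 ≤ ub x) →
      ¬ (∀ᵐ x ∂(volume : Measure (EV n)), x ∈ Ω → ub x = 0) →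
      ∃ t₀ > (0:ℝ), ∀ t : ℝ, t ∈ Set.Ioo 0 t₀ →
        energy s K Ω μ lam g (fun x => t * ub x) < 0) ∧
    (∀ ε > (0:ℝ), ∃ w : EV n → ℝ, MemX0 K Ω w ∧ gNorm K w < ε ∧
      energy s K Ω μ lam g w < energy s K Ω μ lam g (fun _ => 0)) := by
  obtain ⟨hs0, -⟩ := hs
  have hn0 : 0 < n := by
    have h : (0:ℝ) < n := by linarith
    exact_mod_cast h
  have h2star : 0 < twoStar n s := div_pos (by push_cast; linarith) (by linarith)
  constructor
  · intro ub hub hbdd hpos hne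
    exact Aux.part1 s hs0 hn Ω hΩo hΩb K hKpos lam μ hlam hμ g hgc hg2 ub hub hbdd hpos hne
  · intro ε hε
    obtain ⟨x₀, hx₀⟩ := hΩne
    obtain ⟨ρ, hρpos, hball⟩ := Metric.isOpen_iff.mp hΩo x₀ hx₀
    set w : EV n → ℝ := fun x => max 0 (ρ - dist x x₀) with hwdef
    have hw : MemX0 K Ω w := Aux.memX0_bump hn0 K Ω hKpos hK1 x₀ ρ hρpos hball
    have hwle : ∀ x, w x ≤ ρ := fun x =>
      max_le hρpos.le (by linarith [dist_nonneg (x := x) (y := x₀)])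
    have hwnn : ∀ x, 0 ≤ w x := fun x => le_max_left _ _
    have hwbdd : ∃ C : ℝ, ∀ᵐ x ∂(volume : Measure (EV n)), |w x| ≤ C :=
      ⟨ρ, Eventually.of_forall fun x => by rw [abs_of_nonneg (hwnn x)]; exact hwle x⟩
    have hwpos : ∀ᵐ x ∂(volume : Measure (EV n)), 0 ≤ w x := Eventually.of_forall hwnn
    have hwne : ¬ (∀ᵐ x ∂(volume : Measure (EV n)), x ∈ Ω → w x = 0) := by
      intro h
      have hball0 : ∀ᵐ x ∂(volume : Measure (EV n)), x ∉ Metric.ball x₀ ρ := by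
        filter_upwards [h] with x hx hmem
        have h1 : w x = 0 := hx (hball hmem)
        have h2 : 0 < ρ - dist x x₀ := by
          have := Metric.mem_ball.mp hmem
          linarith
        have h3 : 0 < w x := lt_of_lt_of_le h2 (le_max_right _ _)
        linarith
      rw [ae_iff] at hball0
      simp only [not_not] at hball0
      have hb0 : volume (Metric.ball x₀ ρ) = 0 := by
        simpa [Set.setOf_mem_eq, Metric.ball] using hball0
      exact absurd hb0 (Metric.measure_ball_pos volume x₀ hρpos).ne'
    obtain ⟨t₀, ht₀, hmain⟩ := Aux.part1 s hs0 hn Ω hΩo hΩb K hKpos lam μ hlam hμ g hgc hg2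
      w hw hwbdd hwpos hwne
    set Qw := gInner K w w with hQw
    have hQw0 : 0 ≤ Qw := Aux.gInner_self_nonneg K hKpos w
    set sq := Real.sqrt Qw with hsq
    have hsq0 : 0 ≤ sq := Real.sqrt_nonneg _
    set t := min (t₀ / 2) (ε / (sq + 1)) with htdef
    have ht : 0 < t := lt_min (by linarith) (div_pos hε (by linarith))
    refine ⟨fun x => t * w x, ?_, ?_, ?_⟩
    · refine ⟨hw.meas.const_mul t, ?_, ?_⟩
      · filter_upwards [hw.zero] with x hx hxo
        rw [hx hxo, mul_zero]
      · have hfin := hw.fin.const_mul (t ^ 2)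
        exact hfin.congr (Eventually.of_forall fun p => by ring)
    · have hgi : gNorm K (fun x => t * w x) = t * sq := by
        rw [gNorm, Aux.gInner_smul, ← hQw, Real.sqrt_mul (sq_nonneg t), hsq,
          Real.sqrt_sq ht.le]
      rw [hgi]
      have h1 : t ≤ ε / (sq + 1) := min_le_right _ _
      have h2 : t * sq ≤ ε / (sq + 1) * sq := mul_le_mul_of_nonneg_right h1 hsq0
      have h3 : ε / (sq + 1) * sq < ε := by
        rw [div_mul_eq_mul_div, div_lt_iff₀ (by linarith)]
        nlinarith
      linarith
    · have hE0 : energy s K Ω μ lam g (fun _ : EV n => (0:ℝ)) = 0 := by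
        have hg0 : gInner K (fun _ : EV n => (0:ℝ)) (fun _ : EV n => (0:ℝ)) = 0 := by
          rw [gInner]
          simp
        rw [energy, gNorm, hg0, Real.sqrt_zero]
        have h2ne : twoStar n s ≠ 0 := ne_of_gt h2star
        simp [Real.zero_rpow h2ne, intervalIntegral.integral_same]
      rw [hE0]
      exact hmain t ⟨ht, lt_of_le_of_lt (min_le_left _ _) (by linarith)⟩
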